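/- (Catch-up Lemma) Let s ∈ ℕ and v, w ∈ V, and let t0 ≤ t1 be times satisfying t1 ≥ t0 + Ξ_v^s(t0)/μ. Then L_w(t1) ≥ (t1 − t0) + L_v(t0) − (2s+1)κ·d(v,w). -/

import Mathlib

open Finset

variable {V : Type*}

/-- Node `v` satisfies the *fast condition* at time `t`. -/
def fastCond (G : SimpleGraph V) (L : V → ℝ → ℝ) (κ : ℝ) (v : V) (t : ℝ) : Prop :=
  ∃ s : ℕ, (∃ x, G.Adj v x ∧ (2 * (s : ℝ) + 1) * κ ≤ L x t - L v t) ∧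
    ∀ y, G.Adj v y → L v t - L y t ≤ (2 * (s : ℝ) + 1) * κ

/-- Node `v` satisfies the *slow condition* at time `t`. -/
def slowCond (G : SimpleGraph V) (L : V → ℝ → ℝ) (κ : ℝ) (v : V) (t : ℝ) : Prop :=
  ∃ s : ℕ, (∃ x, G.Adj v x ∧ 2 * (s : ℝ) * κ ≤ L v t - L x t) ∧
    ∀ y, G.Adj v y → L y t - L v t ≤ 2 * (s : ℝ) * κ

/-- `Ψ_v^s(t) = max_{w ∈ V} (L_w(t) - L_v(t) - 2sκ·d(v,w))`. -/
noncomputable def Psi [Fintype V] [Nonempty V] (G : SimpleGraph V) (L : V → ℝ → ℝ)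
    (κ : ℝ) (s : ℕ) (v : V) (t : ℝ) : ℝ :=
  univ.sup' univ_nonempty fun w => L w t - L v t - 2 * (s : ℝ) * κ * (G.dist v w)

/-- `Ψ^s(t) = max_{v ∈ V} Ψ_v^s(t)`. -/
noncomputable def PsiMax [Fintype V] [Nonempty V] (G : SimpleGraph V) (L : V → ℝ → ℝ)
    (κ : ℝ) (s : ℕ) (t : ℝ) : ℝ :=
  univ.sup' univ_nonempty fun v => Psi G L κ s v t

/-- `Ξ_v^s(t) = max_{w ∈ V} (L_v(t) - L_w(t) - (2s+1)κ·d(v,w))`. -/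
noncomputable def Xi [Fintype V] [Nonempty V] (G : SimpleGraph V) (L : V → ℝ → ℝ)
    (κ : ℝ) (s : ℕ) (v : V) (t : ℝ) : ℝ :=
  univ.sup' univ_nonempty fun w => L v t - L w t - (2 * (s : ℝ) + 1) * κ * (G.dist v w)

/-- The global skew `𝒢(t) = max_{v,w ∈ V} |L_v(t) - L_w(t)|`. -/
noncomputable def GSkew [Fintype V] [Nonempty V] (L : V → ℝ → ℝ) (t : ℝ) : ℝ :=
  univ.sup' univ_nonempty fun p : V × V => |L p.1 t - L p.2 t|

open Filter Topology in
lemma min_grow {ι : Type*} [Fintype ι] [Nonempty ι] (h : ι → ℝ → ℝ) (μ a b : ℝ)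
    (hab : a ≤ b) (hdiff : ∀ i, Differentiable ℝ (h i))
    (hd : ∀ t ∈ Set.Icc a b, ∀ i : ι, (∀ j, h i t ≤ h j t) → μ ≤ deriv (h i) t) :
    (univ.inf' univ_nonempty fun i => h i a) + μ * (b - a) ≤
      univ.inf' univ_nonempty fun i => h i b := by
  set φ : ℝ → ℝ := fun t => univ.inf' univ_nonempty fun i => h i t with hφ
  rcases eq_or_lt_of_le hab with rfl | hab'
  · simp
  by_contra hlt
  push_neg at hlt
  set ε : ℝ := (φ a + μ * (b - a) - φ b) / (2 * (b - a)) with hε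
  have hεpos : 0 < ε := div_pos (by linarith) (by linarith)
  set ψ : ℝ → ℝ := fun t => φ a + (μ - ε) * (t - a) with hψ
  have hφcont : Continuous φ := by
    apply Continuous.finset_inf'_apply
    intro i _
    exact (hdiff i).continuous
  have hψcont : Continuous ψ := by fun_prop
  set S : Set ℝ := {t | t ∈ Set.Icc a b ∧ ψ t ≤ φ t} with hS
  have haS : a ∈ S := ⟨⟨le_refl a, hab⟩, by simp [hψ]⟩
  have hSne : S.Nonempty := ⟨a, haS⟩
  have hSbdd : BddAbove S := ⟨b, fun t ht => ht.1.2⟩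
  have hSclosed : IsClosed S := by
    have : S = Set.Icc a b ∩ {t | ψ t ≤ φ t} := rfl
    rw [this]
    exact isClosed_Icc.inter (isClosed_le hψcont hφcont)
  have hτS : sSup S ∈ S := hSclosed.csSup_mem hSne hSbdd
  set τ := sSup S with hτ
  have hτb : τ ≤ b := csSup_le hSne fun t ht => ht.1.2
  have haτ : a ≤ τ := le_csSup hSbdd haS
  rcases eq_or_lt_of_le hτb with heq | hτb'
  · -- τ = b : contradiction with hlt
    have hψb : ψ b ≤ φ b := heq ▸ hτS.2
    have h1 : ψ b = φ a + μ * (b - a) - ε * (b - a) := by simp only [hψ]; ring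
    have hba : (2:ℝ) * (b - a) ≠ 0 := ne_of_gt (by linarith)
    have hX : 2 * (ε * (b - a)) = φ a + μ * (b - a) - φ b := by
      rw [hε]; field_simp
    linarith
  · -- τ < b : find a point of S beyond τ
    have hev : ∀ i : ι, ∀ᶠ t in 𝓝[>] τ, ψ t ≤ h i t := by
      intro i
      rcases le_or_gt (h i τ) (ψ τ) with hcase | hcase
      · -- i is a minimizer at τ
        have hφτ : ψ τ ≤ φ τ := hτS.2
        have hle : φ τ ≤ h i τ := inf'_le _ (mem_univ i)
        have heqi : h i τ = ψ τ := le_antisymm hcase (le_trans hφτ hle)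
        have hmin : ∀ j, h i τ ≤ h j τ := fun j =>
          heqi ▸ le_trans hφτ (inf'_le _ (mem_univ j))
        have hder : μ ≤ deriv (h i) τ := hd τ ⟨haτ, hτb⟩ i hmin
        have hslope : Tendsto (slope (h i) τ) (𝓝[≠] τ) (𝓝 (deriv (h i) τ)) :=
          hasDerivAt_iff_tendsto_slope.mp (hdiff i τ).hasDerivAt
        have h1 : ∀ᶠ t in 𝓝[≠] τ, μ - ε < slope (h i) τ t :=
          hslope.eventually (eventually_gt_nhds (by linarith))
        have h2 : ∀ᶠ t in 𝓝[>] τ, μ - ε < slope (h i) τ t :=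
          h1.filter_mono (nhdsWithin_mono τ fun x hx => ne_of_gt hx)
        filter_upwards [h2, self_mem_nhdsWithin] with t hslt (htτ : τ < t)
        rw [slope_def_field, lt_div_iff₀ (by linarith : (0:ℝ) < t - τ)] at hslt
        have hψt : ψ t - ψ τ = (μ - ε) * (t - τ) := by simp only [hψ]; ring
        linarith
      · -- h i τ > ψ τ : continuity
        have hc : Tendsto (fun t => h i t - ψ t) (𝓝 τ) (𝓝 (h i τ - ψ τ)) :=
          ((hdiff i).continuous.continuousAt.sub hψcont.continuousAt)
        have h1 : ∀ᶠ t in 𝓝 τ, 0 < h i t - ψ t :=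
          hc.eventually (eventually_gt_nhds (by linarith))
        exact (h1.filter_mono nhdsWithin_le_nhds).mono fun t ht => le_of_lt (by linarith)
    have hall : ∀ᶠ t in 𝓝[>] τ, ∀ i : ι, ψ t ≤ h i t := eventually_all.mpr hev
    have hIoo : ∀ᶠ t in 𝓝[>] τ, t ∈ Set.Ioo τ b := Ioo_mem_nhdsGT_of_mem ⟨le_refl τ, hτb'⟩
    obtain ⟨t, ht1, ht2⟩ := (hall.and hIoo).exists
    have htS : t ∈ S := ⟨⟨le_trans haτ ht2.1.le, ht2.2.le⟩, le_inf' _ _ fun j _ => ht1 j⟩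
    exact absurd (le_csSup hSbdd htS) (not_le.mpr ht2.1)

/-- Catch-up Lemma. -/
theorem stmt_7 [Fintype V] [Nonempty V] (G : SimpleGraph V) (hconn : G.Connected)
    (L : V → ℝ → ℝ) (κ ρ μ : ℝ) (hκ : 0 < κ) (hρ : 0 < ρ) (hρμ : ρ < μ)
    (hdiff : ∀ v, Differentiable ℝ (L v))
    (hrate : ∀ v u, 0 ≤ u → 1 ≤ deriv (L v) u ∧ deriv (L v) u ≤ (1 + μ) * (1 + ρ))
    (hfastI : ∀ v u, 0 ≤ u → fastCond G L κ v u → 1 + μ ≤ deriv (L v) u)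
    (hslowI : ∀ v u, 0 ≤ u → slowCond G L κ v u → deriv (L v) u ≤ 1 + ρ)
    (s : ℕ) (v w : V) (t0 t1 : ℝ) (ht0 : 0 ≤ t0) (ht01 : t0 ≤ t1)
    (hcatch : t0 + Xi G L κ s v t0 / μ ≤ t1) :
    (t1 - t0) + L v t0 - (2 * (s : ℝ) + 1) * κ * (G.dist v w) ≤ L w t1 := by
  have hμ : 0 < μ := lt_trans hρ hρμ
  set c : ℝ := (2 * (s : ℝ) + 1) * κ with hc
  have hcpos : 0 < c := by positivity
  set h : V → ℝ → ℝ := fun i t => L i t + c * (G.dist v i) - (t - t0) with hh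
  have hdiffh : ∀ i, Differentiable ℝ (h i) := by
    intro i
    simp only [hh]
    exact ((hdiff i).add_const _).sub (differentiable_id.sub_const t0)
  have hderivh : ∀ i t, deriv (h i) t = deriv (L i) t - 1 := by
    intro i t
    have h1 : HasDerivAt (h i) (deriv (L i) t - 1) t := by
      have := ((hdiff i t).hasDerivAt.add_const (c * (G.dist v i))).sub
        ((hasDerivAt_id t).sub_const t0)
      exact this
    exact h1.deriv
  have hmono : ∀ i, MonotoneOn (h i) (Set.Ici t0) := by
    intro i
    apply monotoneOn_of_deriv_nonneg (convex_Ici t0) (hdiffh i).continuous.continuousOn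
      ((hdiffh i).differentiableOn)
    intro u hu
    rw [interior_Ici] at hu
    have hu0 : 0 ≤ u := le_trans ht0 (le_of_lt hu)
    rw [hderivh]
    linarith [(hrate i u hu0).1]
  set φ : ℝ → ℝ := fun t => univ.inf' univ_nonempty fun i => h i t with hφ
  have hφmono : ∀ a b : ℝ, t0 ≤ a → a ≤ b → φ a ≤ φ b := by
    intro a b ha hab
    apply le_inf'
    intro j _
    exact le_trans (inf'_le _ (mem_univ j)) (hmono j ha (le_trans ha hab) hab)
  -- reduce the goal to `L v t0 ≤ φ t1`
  have hred : L v t0 ≤ φ t1 → (t1 - t0) + L v t0 - c * (G.dist v w) ≤ L w t1 := by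
    intro hle
    have := le_trans hle (inf'_le (f := fun i => h i t1) (mem_univ w))
    simp only [hh] at this
    linarith
  apply hred
  by_contra hφ1
  push_neg at hφ1
  -- basic facts about Xi
  set Ξ : ℝ := Xi G L κ s v t0 with hΞ
  have hΞ0 : 0 ≤ Ξ := by
    have := le_sup' (fun w => L v t0 - L w t0 - c * (G.dist v w)) (mem_univ v)
    simp only [SimpleGraph.dist_self, Nat.cast_zero, mul_zero, sub_zero, sub_self] at this
    exact le_trans (le_of_eq rfl) this
  have hφt0 : L v t0 - Ξ ≤ φ t0 := by
    apply le_inf'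
    intro i _
    have : L v t0 - L i t0 - c * (G.dist v i) ≤ Ξ :=
      le_sup' (fun w => L v t0 - L w t0 - c * (G.dist v w)) (mem_univ i)
    simp only [hh]
    linarith
  have hΞμ : Ξ ≤ μ * (t1 - t0) := by
    have h1 : Ξ / μ ≤ t1 - t0 := by linarith
    calc Ξ = (Ξ / μ) * μ := by field_simp
    _ ≤ (t1 - t0) * μ := mul_le_mul_of_nonneg_right h1 (le_of_lt hμ)
    _ = μ * (t1 - t0) := mul_comm _ _
  -- the minimizer condition
  have hd : ∀ t ∈ Set.Icc t0 t1, ∀ i : V, (∀ j, h i t ≤ h j t) → μ ≤ deriv (h i) t := by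
    intro t ht i hmin
    have ht00 : (0:ℝ) ≤ t := le_trans ht0 ht.1
    -- h i t < L v t0
    have hit : h i t < L v t0 := by
      have h1 : h i t ≤ φ t := le_inf' _ _ fun j _ => hmin j
      have h2 : φ t ≤ φ t1 := hφmono t t1 ht.1 ht.2
      linarith
    -- h v t ≥ L v t0, so i ≠ v
    have hvt : L v t0 ≤ h v t := by
      have h1 : h v t0 ≤ h v t := hmono v (le_refl t0) ht.1 ht.1
      have h2 : h v t0 = L v t0 := by
        simp [hh, SimpleGraph.dist_self]
      linarith
    have hne : i ≠ v := by
      rintro rfl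
      linarith
    have hdpos : 0 < G.dist v i := hconn.pos_dist_of_ne (Ne.symm hne)
    -- find a neighbor x of i closer to v
    obtain ⟨p, hp⟩ := hconn.exists_walk_length_eq_dist i v
    have hplen : 0 < p.length := by
      rw [hp, SimpleGraph.dist_comm]
      exact hdpos
    obtain ⟨x, hadjx, hqlen⟩ :
        ∃ x, G.Adj i x ∧ (G.dist v x : ℝ) ≤ (G.dist v i : ℝ) - 1 := by
      cases p with
      | nil => simp at hplen
      | @cons _ x _ hadj q =>
        refine ⟨x, hadj, ?_⟩
        have h1 : G.dist x v ≤ q.length := SimpleGraph.dist_le q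
        have h2 : q.length + 1 = G.dist i v := by simpa using hp
        have h3 : G.dist v x + 1 ≤ G.dist v i := by
          rw [show G.dist v x = G.dist x v from SimpleGraph.dist_comm,
            show G.dist v i = G.dist i v from SimpleGraph.dist_comm]
          omega
        have h4 := (Nat.cast_le (α := ℝ)).mpr h3
        push_cast at h4
        linarith
    -- fast condition for i at t
    have hfast : fastCond G L κ i t := by
      refine ⟨s, ⟨x, hadjx, ?_⟩, ?_⟩
      · have h1 := hmin x
        simp only [hh] at h1
        have h2 : c * (G.dist v x) ≤ c * ((G.dist v i : ℝ) - 1) :=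
          mul_le_mul_of_nonneg_left hqlen (le_of_lt hcpos)
        rw [← hc]
        nlinarith
      · intro y hy
        have h1 := hmin y
        simp only [hh] at h1
        have hdy : (G.dist v y : ℝ) ≤ (G.dist v i : ℝ) + 1 := by
          have h2 : G.dist v y ≤ G.dist v i + G.dist i y := hconn.dist_triangle
          have h3 : G.dist i y = 1 := SimpleGraph.dist_eq_one_iff_adj.mpr hy
          have := Nat.cast_le (α := ℝ) |>.mpr h2
          push_cast [h3] at this
          linarith
        have h2 : c * (G.dist v y) ≤ c * ((G.dist v i : ℝ) + 1) :=
          mul_le_mul_of_nonneg_left hdy (le_of_lt hcpos)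
        rw [← hc]
        nlinarith
    have := hfastI i t ht00 hfast
    rw [hderivh]
    linarith
  have hkey := min_grow h μ t0 t1 ht01 hdiffh hd
  have hk1 : φ t0 + μ * (t1 - t0) ≤ φ t1 := hkey
  linarith
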